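/- Let Δ be a 2-dimensional Buchsbaum simplicial complex on [n] and let Δ_1,…,Δ_t be 2-dimensional simplicial complexes whose vertex sets are contained in [n]. If Δ ∪ Δ_k is Buchsbaum for every k = 1,2,…,t, then Δ ∪ Δ_1 ∪ ⋯ ∪ Δ_j is Buchsbaum for every j = 1,2,…,t. -/

import Mathlib

open Finset

noncomputable section

/-- `Δ` is a simplicial complex on `[n] = {1,…,n}`: a collection of subsets of `[n]`,
closed under taking subsets, containing every singleton `{i}` for `i ∈ [n]`. -/
def IsComplexOn (n : ℕ) (Δ : Finset (Finset ℕ)) : Prop :=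
  (∀ F ∈ Δ, ∀ G ⊆ F, G ∈ Δ) ∧
  (∀ F ∈ Δ, ∀ i ∈ F, i ∈ Finset.Icc 1 n) ∧
  (∀ i ∈ Finset.Icc 1 n, ({i} : Finset ℕ) ∈ Δ)

/-- a simplicial complex whose vertex set is contained in `[n]`:
a downward closed collection of subsets of `[n]`. -/
def IsComplexIn (n : ℕ) (Δ : Finset (Finset ℕ)) : Prop :=
  (∀ F ∈ Δ, ∀ G ⊆ F, G ∈ Δ) ∧ (∀ F ∈ Δ, ∀ i ∈ F, i ∈ Finset.Icc 1 n)

/-- the faces of `Δ` with `m` vertices -/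
def facesOf (Δ : Finset (Finset ℕ)) (m : ℕ) : Finset (Finset ℕ) :=
  Δ.filter fun F => F.card = m

/-- `fVec Δ j = f_{j-1}(Δ)`, the number of faces of `Δ` with `j` vertices;
by convention `f_{-1}(Δ) = 1`. -/
def fVec (Δ : Finset (Finset ℕ)) (j : ℕ) : ℤ :=
  if j = 0 then 1 else ((facesOf Δ j).card : ℤ)

/-- the `h`-vector of a `(d-1)`-dimensional complex, defined by
`∑ f_{i-1} (x-1)^{d-i} = ∑ h_i x^{d-i}`, i.e.
`h_i = ∑_{j=0}^{i} (-1)^{i-j} C(d-j, i-j) f_{j-1}`. -/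
def hVec (d : ℕ) (Δ : Finset (Finset ℕ)) (i : ℕ) : ℤ :=
  ∑ j ∈ Finset.range (i + 1),
    (-1 : ℤ) ^ (i - j) * ((d - j).choose (i - j) : ℤ) * fVec Δ j

/-- the dimension `max {k : f_k(Δ) ≠ 0}` of `Δ`, as an integer -/
def dimZ (Δ : Finset (Finset ℕ)) : ℤ := ((Δ.sup Finset.card : ℕ) : ℤ) - 1

/-- the link `lk_Δ(F) = {G : G ∩ F = ∅, G ∪ F ∈ Δ}` -/
def link (Δ : Finset (Finset ℕ)) (F : Finset ℕ) : Finset (Finset ℕ) :=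
  Δ.filter fun G => Disjoint G F ∧ G ∪ F ∈ Δ

variable (K : Type) [Field K]

/-- the simplicial boundary operator on formal `K`-linear combinations of
finite subsets of `ℕ` (vertices ordered by the order on `ℕ`):
`∂ F = ∑_{v ∈ F} (-1)^{#{u ∈ F : u < v}} (F \ {v})`. -/
def bdry : (Finset ℕ →₀ K) →ₗ[K] (Finset ℕ →₀ K) :=
  Finsupp.lsum K fun F => LinearMap.toSpanSingleton K (Finset ℕ →₀ K)
    (∑ v ∈ F, ((-1 : K) ^ ((F.filter fun u => u < v).card)) • Finsupp.single (F.erase v) (1 : K))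

/-- the space of simplicial `K`-chains of `Δ` spanned by the faces with `m` vertices
(for `m = 0` this is the span of the empty face, giving *reduced* homology) -/
def chains (Δ : Finset (Finset ℕ)) (m : ℕ) : Submodule K (Finset ℕ →₀ K) :=
  Submodule.span K ((fun F => Finsupp.single F (1 : K)) '' (facesOf Δ m : Set (Finset ℕ)))

/-- the dimension of the reduced homology of `Δ` at faces of cardinality `m`:
`dim (ker ∂ ∩ C_m) - dim (∂ C_{m+1})` -/
def homDim (Δ : Finset (Finset ℕ)) (m : ℕ) : ℕ :=
  Module.finrank K ↥(chains K Δ m ⊓ LinearMap.ker (bdry K))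
    - Module.finrank K ↥((chains K Δ (m + 1)).map (bdry K))

/-- the reduced Betti number `β_i(Δ; K) = dim_K H̃_i(Δ; K)` for `i : ℤ` -/
def betti (Δ : Finset (Finset ℕ)) (i : ℤ) : ℕ :=
  if 0 ≤ i + 1 then homDim K Δ (i + 1).toNat else 0

/-- all facets (maximal faces) of `Δ` have the same cardinality -/
def IsPure (Δ : Finset (Finset ℕ)) : Prop :=
  ∀ F ∈ Δ, (∀ G ∈ Δ, F ⊆ G → F = G) → F.card = Δ.sup Finset.card

/-- `Δ` is Cohen–Macaulay (over `K`): for every face `F ∈ Δ` (including `∅`),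
`β_i(lk_Δ(F)) = 0` for all `i ≠ dim Δ - |F|`. -/
def IsCohenMacaulay (Δ : Finset (Finset ℕ)) : Prop :=
  ∀ F ∈ Δ, ∀ i : ℤ, i ≠ dimZ Δ - F.card → betti K (link Δ F) i = 0

/-- `Δ` is Buchsbaum (over `K`): `Δ` is pure and the link of every vertex is
Cohen–Macaulay. -/
def IsBuchsbaum (Δ : Finset (Finset ℕ)) : Prop :=
  IsPure Δ ∧ ∀ v : ℕ, ({v} : Finset ℕ) ∈ Δ → IsCohenMacaulay K (link Δ {v})

/-- `Δ` is connected: any two vertices are joined by a path of edges of `Δ` -/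
def IsConnectedComplex (Δ : Finset (Finset ℕ)) : Prop :=
  ∀ u v : ℕ, ({u} : Finset ℕ) ∈ Δ → ({v} : Finset ℕ) ∈ Δ →
    Relation.ReflTransGen (fun a b : ℕ => a ≠ b ∧ ({a, b} : Finset ℕ) ∈ Δ) u v

/-- `Δ` is link-acyclic: `β_i(lk_Δ(v)) = 0` for every vertex `v` of `Δ` and every `i` -/
def IsLinkAcyclic (Δ : Finset (Finset ℕ)) : Prop :=
  ∀ v : ℕ, ({v} : Finset ℕ) ∈ Δ → ∀ i : ℤ, betti K (link Δ {v}) i = 0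

/-- `Δ` is `2`-dimensional with `h`-vector `(a, b, c, e)` -/
def hVector3 (Δ : Finset (Finset ℕ)) (a b c e : ℤ) : Prop :=
  hVec 3 Δ 0 = a ∧ hVec 3 Δ 1 = b ∧ hVec 3 Δ 2 = c ∧ hVec 3 Δ 3 = e

/-- `macaulay2 a = a^⟨2⟩`: if `a = C(b,2) + r` is the (greedy) `2`-nd Macaulay
representation (`b` maximal with `C(b,2) ≤ a`, `0 ≤ r < b`, `r = C(r,1)`), then
`a^⟨2⟩ = C(b+1,3) + C(r+1,2)`, and `0^⟨2⟩ = 0`. -/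
def macaulay2 (a : ℕ) : ℕ :=
  if a = 0 then 0
  else
    (Nat.findGreatest (fun t => t.choose 2 ≤ a) (a + 2) + 1).choose 3
      + (a - (Nat.findGreatest (fun t => t.choose 2 ≤ a) (a + 2)).choose 2 + 1).choose 2

/-- `modRep n i = ī`, the unique element of `[n] = {1,…,n}` congruent to `i` mod `n` -/
def modRep (n : ℕ) (i : ℤ) : ℕ := ((i - 1) % (n : ℤ)).toNat + 1


end

noncomputable section

open Classical

variable (K : Type) [Field K]

lemma bdry_single (F : Finset ℕ) :
    bdry K (Finsupp.single F 1) =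
      ∑ v ∈ F, ((-1 : K) ^ ((F.filter fun u => u < v).card)) • Finsupp.single (F.erase v) (1 : K) := by
  simp [bdry, Finsupp.lsum_single, LinearMap.toSpanSingleton_apply]

lemma bdry_empty : bdry K (Finsupp.single (∅ : Finset ℕ) 1) = 0 := by
  simp [bdry_single]

lemma bdry_vertex (v : ℕ) :
    bdry K (Finsupp.single ({v} : Finset ℕ) 1) = Finsupp.single (∅ : Finset ℕ) 1 := by
  rw [bdry_single]
  have h1 : ({v} : Finset ℕ).filter (fun u => u < v) = ∅ :=
    Finset.filter_eq_empty_iff.mpr (by rintro x hx; simp at hx; omega)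
  simp [h1]

lemma bdry_edge {a b : ℕ} (h : a < b) :
    bdry K (Finsupp.single ({a, b} : Finset ℕ) 1) =
      Finsupp.single ({b} : Finset ℕ) 1 - Finsupp.single ({a} : Finset ℕ) 1 := by
  have hne : a ≠ b := h.ne
  rw [bdry_single, Finset.sum_pair hne]
  have h1 : ({a, b} : Finset ℕ).filter (fun u => u < a) = ∅ :=
    Finset.filter_eq_empty_iff.mpr (by rintro x hx; simp at hx; rcases hx with rfl | rfl <;> omega)
  have h2 : ({a, b} : Finset ℕ).filter (fun u => u < b) = {a} := by
    ext x
    simp only [Finset.mem_filter, Finset.mem_insert, Finset.mem_singleton]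
    constructor
    · rintro ⟨rfl | rfl, hx⟩
      · rfl
      · omega
    · rintro rfl; exact ⟨Or.inl rfl, h⟩
  have h3 : ({a, b} : Finset ℕ).erase a = {b} := by
    rw [Finset.erase_insert (by simp [hne])]
  have h4 : ({a, b} : Finset ℕ).erase b = {a} := by
    rw [Finset.pair_comm, Finset.erase_insert (by simp [hne.symm])]
  rw [h1, h2, h3, h4]
  simp [sub_eq_add_neg, add_comm]


lemma chains_eq_supported (Γ : Finset (Finset ℕ)) (m : ℕ) :
    chains K Γ m = Finsupp.supported K K (↑(facesOf Γ m) : Set (Finset ℕ)) := by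
  rw [chains, Finsupp.supported_eq_span_single]

lemma mem_chains_iff (Γ : Finset (Finset ℕ)) (m : ℕ) (x : Finset ℕ →₀ K) :
    x ∈ chains K Γ m ↔ ∀ F ∈ x.support, F ∈ facesOf Γ m := by
  rw [chains_eq_supported, Finsupp.mem_supported]
  constructor
  · intro h F hF; exact_mod_cast h hF
  · intro h F hF; exact_mod_cast h F hF

instance chains_fd (Γ : Finset (Finset ℕ)) (m : ℕ) : FiniteDimensional K (chains K Γ m) :=
  FiniteDimensional.span_of_finite K ((facesOf Γ m).finite_toSet.image _)

lemma single_mem_chains {Γ : Finset (Finset ℕ)} {m : ℕ} {F : Finset ℕ}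
    (hF : F ∈ Γ) (hc : F.card = m) : Finsupp.single F (1 : K) ∈ chains K Γ m :=
  Submodule.subset_span ⟨F, by simp [facesOf, hF, hc], rfl⟩

lemma homDim_eq_zero_of_no_faces (Γ : Finset (Finset ℕ)) (m : ℕ)
    (h : facesOf Γ m = ∅) : homDim K Γ m = 0 := by
  have : chains K Γ m = ⊥ := by
    rw [chains, h]; simp
  rw [homDim, this, bot_inf_eq]
  simp [finrank_bot]

lemma betti_neg (Γ : Finset (Finset ℕ)) (i : ℤ) (hi : i < -1) : betti K Γ i = 0 := by
  rw [betti, if_neg (by omega)]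


lemma map_fd (Γ : Finset (Finset ℕ)) (m : ℕ) :
    FiniteDimensional K ((chains K Γ m).map (bdry K)) :=
  Module.Finite.map _ _

lemma homDim_zero_eq_zero (Γ : Finset (Finset ℕ)) (h0 : (∅ : Finset ℕ) ∈ Γ)
    {v : ℕ} (hv : ({v} : Finset ℕ) ∈ Γ) : homDim K Γ 0 = 0 := by
  have hfd := map_fd K Γ 1
  have hsingle : Finsupp.single (∅ : Finset ℕ) (1 : K) ≠ 0 := by
    intro h
    have := congrFun (congrArg (⇑) h) ∅
    simp at this
  -- the image contains single ∅ 1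
  have hmem : Finsupp.single (∅ : Finset ℕ) (1 : K) ∈ (chains K Γ 1).map (bdry K) :=
    ⟨Finsupp.single ({v} : Finset ℕ) 1, single_mem_chains K hv (by simp), bdry_vertex K v⟩
  have hb : 1 ≤ Module.finrank K ((chains K Γ 1).map (bdry K)) := by
    have := Submodule.finrank_mono (Submodule.span_le.mpr
      (Set.singleton_subset_iff.mpr hmem) : (K ∙ Finsupp.single (∅ : Finset ℕ) (1:K)) ≤ _)
    rwa [finrank_span_singleton hsingle] at this
  have ha : Module.finrank K ↥(chains K Γ 0 ⊓ LinearMap.ker (bdry K)) ≤ 1 := by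
    have hle : chains K Γ 0 ⊓ LinearMap.ker (bdry K) ≤ K ∙ Finsupp.single (∅ : Finset ℕ) (1:K) := by
      intro x hx
      have hx0 := (mem_chains_iff K Γ 0 x).mp hx.1
      -- x is supported on {∅}
      have hsupp : x.support ⊆ {∅} := by
        intro F hF
        have := hx0 F hF
        simp only [facesOf, Finset.mem_filter, Finset.card_eq_zero] at this
        simp [this.2]
      have : x = Finsupp.single (∅ : Finset ℕ) (x ∅) := by
        ext G
        by_cases hG : G = ∅
        · subst hG; simp
        · rw [Finsupp.single_eq_of_ne' (Ne.symm hG)]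
          by_contra hne
          exact hG (Finset.mem_singleton.mp (hsupp (Finsupp.mem_support_iff.mpr hne)))
      rw [this]
      have : Finsupp.single (∅ : Finset ℕ) (x ∅) = (x ∅) • Finsupp.single (∅ : Finset ℕ) (1:K) := by
        rw [Finsupp.smul_single, smul_eq_mul, mul_one]
      rw [this]
      exact Submodule.smul_mem _ _ (Submodule.mem_span_singleton_self _)
    have : Module.finrank K ↥(chains K Γ 0 ⊓ LinearMap.ker (bdry K)) ≤
        Module.finrank K ↥(K ∙ Finsupp.single (∅ : Finset ℕ) (1:K)) := by
      have : FiniteDimensional K ↥(K ∙ Finsupp.single (∅ : Finset ℕ) (1:K)) :=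
        FiniteDimensional.span_of_finite K (Set.finite_singleton _)
      exact Submodule.finrank_mono hle
    rwa [finrank_span_singleton hsingle] at this
  rw [homDim, Nat.zero_add]
  omega


/-- The edge relation of the graph of `Γ`. -/
def eRel (Γ : Finset (Finset ℕ)) : ℕ → ℕ → Prop :=
  fun a b => a ≠ b ∧ ({a, b} : Finset ℕ) ∈ Γ

lemma eRel_symm (Γ : Finset (Finset ℕ)) : Symmetric (eRel Γ) := by
  rintro a b ⟨hne, hm⟩
  exact ⟨hne.symm, by rwa [Finset.pair_comm]⟩

lemma edge_diff_mem {Γ : Finset (Finset ℕ)} {a b : ℕ} (hne : a ≠ b)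
    (hm : ({a, b} : Finset ℕ) ∈ Γ) :
    Finsupp.single ({a} : Finset ℕ) (1 : K) - Finsupp.single ({b} : Finset ℕ) 1 ∈
      (chains K Γ 2).map (bdry K) := by
  rcases lt_or_gt_of_ne hne with h | h
  · have hmem : Finsupp.single ({a, b} : Finset ℕ) (1 : K) ∈ chains K Γ 2 :=
      single_mem_chains K hm (Finset.card_pair hne)
    have : Finsupp.single ({a} : Finset ℕ) (1:K) - Finsupp.single ({b} : Finset ℕ) 1 =
        -(bdry K (Finsupp.single ({a, b} : Finset ℕ) 1)) := by
      rw [bdry_edge K h]; abel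
    rw [this]
    exact Submodule.neg_mem _ ⟨_, hmem, rfl⟩
  · have hm' : ({b, a} : Finset ℕ) ∈ Γ := by rwa [Finset.pair_comm]
    have hmem : Finsupp.single ({b, a} : Finset ℕ) (1 : K) ∈ chains K Γ 2 :=
      single_mem_chains K hm' (Finset.card_pair hne.symm)
    have : Finsupp.single ({a} : Finset ℕ) (1:K) - Finsupp.single ({b} : Finset ℕ) 1 =
        bdry K (Finsupp.single ({b, a} : Finset ℕ) 1) := by
      rw [bdry_edge K h]
    rw [this]
    exact ⟨_, hmem, rfl⟩

lemma path_diff_mem {Γ : Finset (Finset ℕ)} {a b : ℕ}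
    (h : Relation.ReflTransGen (eRel Γ) a b) :
    Finsupp.single ({a} : Finset ℕ) (1 : K) - Finsupp.single ({b} : Finset ℕ) 1 ∈
      (chains K Γ 2).map (bdry K) := by
  induction h with
  | refl => simp
  | tail hab hbc ih =>
    rename_i b' c'
    have : Finsupp.single ({a} : Finset ℕ) (1:K) - Finsupp.single ({c'} : Finset ℕ) 1 =
        (Finsupp.single ({a} : Finset ℕ) (1:K) - Finsupp.single ({b'} : Finset ℕ) 1)
        + (Finsupp.single ({b'} : Finset ℕ) (1:K) - Finsupp.single ({c'} : Finset ℕ) 1) := by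
      abel
    rw [this]
    exact Submodule.add_mem _ ih (edge_diff_mem K hbc.1 hbc.2)

lemma map_le_inf {Γ : Finset (Finset ℕ)} (hdc : ∀ F ∈ Γ, ∀ G ⊆ F, G ∈ Γ) :
    (chains K Γ 2).map (bdry K) ≤ chains K Γ 1 ⊓ LinearMap.ker (bdry K) := by
  rw [chains, Submodule.map_span, Submodule.span_le]
  rintro - ⟨-, ⟨F, hF, rfl⟩, rfl⟩
  simp only [facesOf, Finset.coe_filter, Set.mem_setOf_eq] at hF
  obtain ⟨a, b, hne, rfl⟩ := Finset.card_eq_two.mp hF.2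
  have ha : ({a} : Finset ℕ) ∈ Γ := hdc _ hF.1 _ (by simp)
  have hb : ({b} : Finset ℕ) ∈ Γ := hdc _ hF.1 _ (by simp)
  rcases lt_or_gt_of_ne hne with h | h
  · rw [SetLike.mem_coe, bdry_edge K h]
    refine Submodule.mem_inf.mpr ⟨Submodule.sub_mem _ (single_mem_chains K hb rfl)
      (single_mem_chains K ha rfl), ?_⟩
    rw [LinearMap.mem_ker, map_sub, bdry_vertex, bdry_vertex, sub_self]
  · rw [SetLike.mem_coe, Finset.pair_comm, bdry_edge K h]
    refine Submodule.mem_inf.mpr ⟨Submodule.sub_mem _ (single_mem_chains K ha rfl)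
      (single_mem_chains K hb rfl), ?_⟩
    rw [LinearMap.mem_ker, map_sub, bdry_vertex, bdry_vertex, sub_self]


lemma sum_coeff_eq_zero {x : Finset ℕ →₀ K}
    (hx1 : ∀ F ∈ x.support, F.card = 1) (hker : bdry K x = 0) :
    ∑ F ∈ x.support, x F = 0 := by
  have hxrep : ∑ F ∈ x.support, Finsupp.single F (x F) = x := Finsupp.sum_single x
  have hb : bdry K x = (∑ F ∈ x.support, x F) • Finsupp.single (∅ : Finset ℕ) (1:K) := by
    conv_lhs => rw [← hxrep]
    rw [map_sum, Finset.sum_smul]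
    refine Finset.sum_congr rfl fun F hF => ?_
    obtain ⟨v, rfl⟩ := Finset.card_eq_one.mp (hx1 F hF)
    have : Finsupp.single ({v} : Finset ℕ) (x {v}) = x {v} • Finsupp.single ({v} : Finset ℕ) (1:K) := by
      rw [Finsupp.smul_single, smul_eq_mul, mul_one]
    rw [this, map_smul, bdry_vertex]
  rw [hker] at hb
  have hsingle : Finsupp.single (∅ : Finset ℕ) (1 : K) ≠ 0 := by
    intro h
    have := congrFun (congrArg (⇑) h) ∅
    simp at this
  rcases smul_eq_zero.mp hb.symm with h | h
  · exact h
  · exact absurd h hsingle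

/-- connected ⟹ first reduced homology at dimension 0 vanishes -/
lemma homDim_one_eq_zero_of_connected {Γ : Finset (Finset ℕ)}
    (hconn : ∀ u v : ℕ, ({u} : Finset ℕ) ∈ Γ → ({v} : Finset ℕ) ∈ Γ →
      Relation.ReflTransGen (eRel Γ) u v) :
    homDim K Γ 1 = 0 := by
  have hfd := map_fd K Γ 2
  have hle : chains K Γ 1 ⊓ LinearMap.ker (bdry K) ≤ (chains K Γ 2).map (bdry K) := by
    intro x hx
    have hx1 : ∀ F ∈ x.support, F ∈ Γ ∧ F.card = 1 := by
      intro F hF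
      have := (mem_chains_iff K Γ 1 x).mp hx.1 F hF
      simpa [facesOf] using this
    have hsum : ∑ F ∈ x.support, x F = 0 :=
      sum_coeff_eq_zero K (fun F hF => (hx1 F hF).2) hx.2
    rcases Finset.eq_empty_or_nonempty x.support with hemp | ⟨F0, hF0⟩
    · have : x = 0 := Finsupp.support_eq_empty.mp hemp
      rw [this]; exact Submodule.zero_mem _
    · obtain ⟨v0, hv0eq⟩ := Finset.card_eq_one.mp (hx1 F0 hF0).2
      have hv0 : ({v0} : Finset ℕ) ∈ Γ := hv0eq ▸ (hx1 F0 hF0).1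
      have hxrep : x = ∑ F ∈ x.support, x F •
          (Finsupp.single F (1:K) - Finsupp.single ({v0} : Finset ℕ) 1) := by
        have h1 : ∑ F ∈ x.support, Finsupp.single F (x F) = x := Finsupp.sum_single x
        simp only [smul_sub, Finset.sum_sub_distrib, ← Finset.sum_smul, hsum, zero_smul, sub_zero]
        conv_lhs => rw [← h1]
        refine Finset.sum_congr rfl fun F _ => ?_
        rw [Finsupp.smul_single, smul_eq_mul, mul_one]
      rw [hxrep]
      refine Submodule.sum_mem _ fun F hF => Submodule.smul_mem _ _ ?_
      obtain ⟨u, rfl⟩ := Finset.card_eq_one.mp (hx1 F hF).2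
      exact path_diff_mem K (hconn u v0 (hx1 _ hF).1 hv0)
  rw [homDim, Nat.add_comm]
  exact Nat.sub_eq_zero_of_le (Submodule.finrank_mono hle)

/-- vanishing first reduced homology ⟹ connected -/
lemma connected_of_homDim_one_eq_zero {Γ : Finset (Finset ℕ)}
    (hdc : ∀ F ∈ Γ, ∀ G ⊆ F, G ∈ Γ) (h : homDim K Γ 1 = 0) :
    ∀ u w : ℕ, ({u} : Finset ℕ) ∈ Γ → ({w} : Finset ℕ) ∈ Γ →
      Relation.ReflTransGen (eRel Γ) u w := by
  intro u w hu hw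
  by_contra hnc
  have hnuw : u ≠ w := by rintro rfl; exact hnc .refl
  -- the indicator functional of the component of u
  set P : Finset ℕ → Prop := fun F => ∃ a, F = {a} ∧ Relation.ReflTransGen (eRel Γ) u a with hP
  set ψ : (Finset ℕ →₀ K) →ₗ[K] K :=
    Finsupp.lsum K (fun F => if P F then (LinearMap.id : K →ₗ[K] K) else 0) with hψ
  have hψ_single : ∀ F c, ψ (Finsupp.single F c) = if P F then c else 0 := by
    intro F c
    rw [hψ, Finsupp.lsum_single]
    by_cases hPF : P F <;> simp [hPF]
  have hψ_vanish : (chains K Γ 2).map (bdry K) ≤ LinearMap.ker ψ := by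
    rw [chains, Submodule.map_span, Submodule.span_le]
    rintro - ⟨-, ⟨F, hF, rfl⟩, rfl⟩
    simp only [facesOf, Finset.coe_filter, Set.mem_setOf_eq] at hF
    obtain ⟨a, b, hne, rfl⟩ := Finset.card_eq_two.mp hF.2
    have hreach : Relation.ReflTransGen (eRel Γ) u a ↔ Relation.ReflTransGen (eRel Γ) u b := by
      constructor
      · intro hh; exact hh.tail ⟨hne, hF.1⟩
      · intro hh; exact hh.tail (eRel_symm Γ ⟨hne, hF.1⟩)
    have hPa : P ({a} : Finset ℕ) ↔ Relation.ReflTransGen (eRel Γ) u a := by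
      constructor
      · rintro ⟨a', heq, hr⟩
        have : a = a' := Finset.singleton_injective heq
        exact this ▸ hr
      · intro hr; exact ⟨a, rfl, hr⟩
    have hPb : P ({b} : Finset ℕ) ↔ Relation.ReflTransGen (eRel Γ) u b := by
      constructor
      · rintro ⟨a', heq, hr⟩
        have : b = a' := Finset.singleton_injective heq
        exact this ▸ hr
      · intro hr; exact ⟨b, rfl, hr⟩
    rcases lt_or_gt_of_ne hne with hlt | hlt
    · rw [SetLike.mem_coe, LinearMap.mem_ker, bdry_edge K hlt, map_sub, hψ_single, hψ_single]
      by_cases hra : Relation.ReflTransGen (eRel Γ) u a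
      · rw [if_pos (hPb.mpr (hreach.mp hra)), if_pos (hPa.mpr hra), sub_self]
      · rw [if_neg (fun hc => hra (hreach.mpr (hPb.mp hc))), if_neg (fun hc => hra (hPa.mp hc)),
          sub_self]
    · rw [SetLike.mem_coe, LinearMap.mem_ker, Finset.pair_comm, bdry_edge K hlt, map_sub,
        hψ_single, hψ_single]
      by_cases hra : Relation.ReflTransGen (eRel Γ) u a
      · rw [if_pos (hPb.mpr (hreach.mp hra)), if_pos (hPa.mpr hra), sub_self]
      · rw [if_neg (fun hc => hra (hPa.mp hc)), if_neg (fun hc => hra (hreach.mpr (hPb.mp hc))),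
          sub_self]
  set x0 : Finset ℕ →₀ K :=
    Finsupp.single ({u} : Finset ℕ) 1 - Finsupp.single ({w} : Finset ℕ) 1 with hx0
  have hx0mem : x0 ∈ chains K Γ 1 ⊓ LinearMap.ker (bdry K) := by
    refine Submodule.mem_inf.mpr ⟨Submodule.sub_mem _ (single_mem_chains K hu rfl)
      (single_mem_chains K hw rfl), ?_⟩
    rw [LinearMap.mem_ker, hx0, map_sub, bdry_vertex, bdry_vertex, sub_self]
  have hψx0 : ψ x0 = 1 := by
    rw [hx0, map_sub, hψ_single, hψ_single, if_pos ⟨u, rfl, .refl⟩, if_neg, sub_zero]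
    rintro ⟨a', heq, hr⟩
    have : w = a' := Finset.singleton_injective heq
    exact hnc (this ▸ hr)
  have hx0nmem : x0 ∉ (chains K Γ 2).map (bdry K) := by
    intro hc
    have := hψ_vanish hc
    rw [LinearMap.mem_ker] at this
    rw [this] at hψx0
    exact one_ne_zero hψx0.symm
  have hlt : (chains K Γ 2).map (bdry K) < chains K Γ 1 ⊓ LinearMap.ker (bdry K) := by
    refine lt_of_le_of_ne (map_le_inf K hdc) fun heq => ?_
    rw [heq] at hx0nmem
    exact hx0nmem hx0mem
  have : FiniteDimensional K ↥(chains K Γ 1 ⊓ LinearMap.ker (bdry K)) :=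
    Submodule.finiteDimensional_of_le inf_le_left
  have := Submodule.finrank_lt_finrank_of_lt hlt
  rw [homDim, show (1:ℕ) + 1 = 2 from rfl] at h
  omega


lemma betti_cast (Γ : Finset (Finset ℕ)) (m : ℕ) :
    betti K Γ ((m : ℤ) - 1) = homDim K Γ m := by
  rw [betti, if_pos (by omega)]
  congr 1
  omega

lemma facesOf_empty_of_card_le {Γ : Finset (Finset ℕ)} {c m : ℕ}
    (hcard : ∀ G ∈ Γ, G.card ≤ c) (hm : c < m) : facesOf Γ m = ∅ := by
  rw [facesOf, Finset.filter_eq_empty_iff]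
  intro G hG hGc
  have := hcard G hG
  omega

lemma link_empty (Γ : Finset (Finset ℕ)) : link Γ ∅ = Γ := by
  rw [link, Finset.filter_true_of_mem]
  intro G hG
  exact ⟨Finset.disjoint_empty_right _, by rwa [Finset.union_empty]⟩

/-- a connected graph in which every vertex lies on an edge is Cohen–Macaulay -/
lemma cm_of_graph {Λ : Finset (Finset ℕ)}
    (hdc : ∀ F ∈ Λ, ∀ G ⊆ F, G ∈ Λ)
    (h0 : (∅ : Finset ℕ) ∈ Λ)
    (hvert : ∃ u, ({u} : Finset ℕ) ∈ Λ)
    (hve : ∀ u, ({u} : Finset ℕ) ∈ Λ → ∃ w, w ≠ u ∧ ({u, w} : Finset ℕ) ∈ Λ)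
    (hcard : ∀ G ∈ Λ, G.card ≤ 2)
    (hsup : Λ.sup Finset.card = 2)
    (hconn : ∀ u v : ℕ, ({u} : Finset ℕ) ∈ Λ → ({v} : Finset ℕ) ∈ Λ →
      Relation.ReflTransGen (eRel Λ) u v) :
    IsCohenMacaulay K Λ := by
  intro F hF i hi
  have hdimZ : dimZ Λ = 1 := by rw [dimZ, hsup]; rfl
  rw [hdimZ] at hi
  rcases lt_or_ge i (-1) with hneg | hge
  · exact betti_neg K _ i hneg
  obtain ⟨m, rfl⟩ : ∃ m : ℕ, i = (m : ℤ) - 1 := ⟨(i + 1).toNat, by omega⟩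
  rw [betti_cast]
  have hFc : F.card ≤ 2 := hcard F hF
  interval_cases hc : F.card
  · -- F = ∅
    have hFe : F = ∅ := Finset.card_eq_zero.mp hc
    subst hFe
    rw [link_empty]
    have hm2 : (m : ℤ) - 1 ≠ 1 := by simpa using hi
    match m with
    | 0 => exact homDim_zero_eq_zero K Λ h0 hvert.choose_spec
    | 1 => exact homDim_one_eq_zero_of_connected K hconn
    | 2 => omega
    | (n+3) => exact homDim_eq_zero_of_no_faces K Λ _ (facesOf_empty_of_card_le hcard (by omega))
  · -- F = {u}
    obtain ⟨u, rfl⟩ := Finset.card_eq_one.mp hc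
    obtain ⟨w, hwu, hew⟩ := hve u hF
    have hlmem : ∀ G ∈ link Λ {u}, G.card ≤ 1 := by
      intro G hG
      rw [link, Finset.mem_filter] at hG
      have hcu : (G ∪ {u}).card ≤ 2 := hcard _ hG.2.2
      have : u ∉ G := by
        intro hu
        exact (Finset.disjoint_left.mp hG.2.1) hu (Finset.mem_singleton_self u)
      rw [Finset.union_comm, ← Finset.insert_eq, Finset.card_insert_of_notMem this] at hcu
      omega
    match m with
    | 0 =>
      refine homDim_zero_eq_zero K _ ?_ (v := w) ?_
      · rw [link, Finset.mem_filter]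
        exact ⟨h0, Finset.disjoint_empty_left _, by rwa [Finset.empty_union]⟩
      · rw [link, Finset.mem_filter]
        refine ⟨hdc _ hew _ (by simp), by simp [Finset.disjoint_singleton]; omega, ?_⟩
        rw [← Finset.insert_eq, Finset.pair_comm]
        exact hew
    | 1 => omega
    | (n+2) => exact homDim_eq_zero_of_no_faces K _ _ (facesOf_empty_of_card_le hlmem (by omega))
  · -- F is an edge
    have hlmem : ∀ G ∈ link Λ F, G.card ≤ 0 := by
      intro G hG
      rw [link, Finset.mem_filter] at hG
      have hcu : (G ∪ F).card ≤ 2 := hcard _ hG.2.2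
      have hdisj : Disjoint G F := hG.2.1
      rw [Finset.card_union_of_disjoint hdisj, hc] at hcu
      omega
    have hne : ((m : ℤ) - 1) ≠ -1 := by simpa [hc] using hi
    match m with
    | 0 => omega
    | (n+1) =>
      exact homDim_eq_zero_of_no_faces K _ _
        (facesOf_empty_of_card_le (c := 0) hlmem (by omega))

/-- a Cohen–Macaulay graph is connected -/
lemma conn_of_cm {Λ : Finset (Finset ℕ)}
    (hdc : ∀ F ∈ Λ, ∀ G ⊆ F, G ∈ Λ)
    (h0 : (∅ : Finset ℕ) ∈ Λ)
    (hsup : Λ.sup Finset.card = 2)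
    (hcm : IsCohenMacaulay K Λ) :
    ∀ u v : ℕ, ({u} : Finset ℕ) ∈ Λ → ({v} : Finset ℕ) ∈ Λ →
      Relation.ReflTransGen (eRel Λ) u v := by
  have hdimZ : dimZ Λ = 1 := by rw [dimZ, hsup]; rfl
  have hb := hcm ∅ h0 0 (by rw [hdimZ]; simp)
  rw [link_empty] at hb
  have : betti K Λ ((1 : ℤ) - 1) = homDim K Λ 1 := by
    have := betti_cast K Λ 1
    simpa using this
  rw [show (0 : ℤ) = (1 : ℤ) - 1 from rfl, this] at hb
  exact connected_of_homDim_one_eq_zero K hdc hb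


lemma sup3_of_dimZ {Γ : Finset (Finset ℕ)} (h : dimZ Γ = 2) : Γ.sup Finset.card = 3 := by
  rw [dimZ] at h
  omega

lemma exists_facet {Γ : Finset (Finset ℕ)} (hpure : IsPure Γ)
    (hsup : Γ.sup Finset.card = 3) {F : Finset ℕ} (hF : F ∈ Γ) :
    ∃ T ∈ Γ, F ⊆ T ∧ T.card = 3 := by
  obtain ⟨T, hT, hTmax⟩ := Finset.exists_max_image (Γ.filter fun G => F ⊆ G) Finset.card
    ⟨F, Finset.mem_filter.mpr ⟨hF, Finset.Subset.refl F⟩⟩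
  rw [Finset.mem_filter] at hT
  refine ⟨T, hT.1, hT.2, ?_⟩
  rw [← hsup]
  refine hpure T hT.1 fun G hG hTG => ?_
  have hFG : F ⊆ G := hT.2.trans hTG
  have := hTmax G (Finset.mem_filter.mpr ⟨hG, hFG⟩)
  exact Finset.eq_of_subset_of_card_le hTG this

section LinkFacts

variable {Γ : Finset (Finset ℕ)} {v : ℕ}

lemma mem_link_iff {F G : Finset ℕ} :
    G ∈ link Γ F ↔ G ∈ Γ ∧ Disjoint G F ∧ G ∪ F ∈ Γ := by
  rw [link, Finset.mem_filter]

lemma link_dc (hdc : ∀ F ∈ Γ, ∀ G ⊆ F, G ∈ Γ) :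
    ∀ F ∈ link Γ {v}, ∀ G ⊆ F, G ∈ link Γ {v} := by
  intro F hF G hGF
  rw [mem_link_iff] at hF ⊢
  exact ⟨hdc _ hF.1 _ hGF, Finset.disjoint_of_subset_left hGF hF.2.1,
    hdc _ hF.2.2 _ (Finset.union_subset_union_left hGF)⟩

lemma link_empty_mem (hdc : ∀ F ∈ Γ, ∀ G ⊆ F, G ∈ Γ) (hv : ({v} : Finset ℕ) ∈ Γ) :
    (∅ : Finset ℕ) ∈ link Γ {v} := by
  rw [mem_link_iff]
  exact ⟨hdc _ hv _ (Finset.empty_subset _), Finset.disjoint_empty_left _,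
    by rwa [Finset.empty_union]⟩

lemma link_card_le (hsup : Γ.sup Finset.card = 3) :
    ∀ G ∈ link Γ {v}, G.card ≤ 2 := by
  intro G hG
  rw [mem_link_iff] at hG
  have hvG : v ∉ G := fun hvv =>
    (Finset.disjoint_left.mp hG.2.1) hvv (Finset.mem_singleton_self v)
  have h3 : (G ∪ {v}).card ≤ 3 := hsup ▸ Finset.le_sup hG.2.2
  rw [Finset.union_comm, ← Finset.insert_eq, Finset.card_insert_of_notMem hvG] at h3
  omega

lemma link_vertex_edge (hdc : ∀ F ∈ Γ, ∀ G ⊆ F, G ∈ Γ) (hpure : IsPure Γ)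
    (hsup : Γ.sup Finset.card = 3) :
    ∀ u, ({u} : Finset ℕ) ∈ link Γ {v} →
      ∃ w, w ≠ u ∧ ({u, w} : Finset ℕ) ∈ link Γ {v} := by
  intro u hu
  rw [mem_link_iff] at hu
  have huv : u ≠ v := by
    have h := hu.2.1
    rw [Finset.disjoint_singleton] at h
    exact h
  obtain ⟨T, hT, hsub, hT3⟩ := exists_facet hpure hsup hu.2.2
  have huT : u ∈ T := hsub (by simp)
  have hvT : v ∈ T := hsub (by simp)
  have hne : (T \ ({u} ∪ {v})).Nonempty := by
    rcases Finset.eq_empty_or_nonempty (T \ ({u} ∪ {v})) with hemp | hne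
    · exfalso
      have hsub2 : T ⊆ {u} ∪ {v} := Finset.sdiff_eq_empty_iff_subset.mp hemp
      have := Finset.card_le_card hsub2
      have h2 : (({u} : Finset ℕ) ∪ {v}).card ≤ 2 := le_trans (Finset.card_union_le _ _) (by simp)
      omega
    · exact hne
  obtain ⟨w, hw⟩ := hne
  rw [Finset.mem_sdiff, Finset.mem_union, Finset.mem_singleton, Finset.mem_singleton] at hw
  push_neg at hw
  have hwT := hw.1
  have hwu := hw.2.1
  have hwv := hw.2.2
  refine ⟨w, hwu, ?_⟩
  rw [mem_link_iff]
  have hsubT : ({u, w} : Finset ℕ) ⊆ T :=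
    Finset.insert_subset huT (Finset.singleton_subset_iff.mpr hwT)
  refine ⟨hdc _ hT _ hsubT, ?_, hdc _ hT _ (Finset.union_subset hsubT
    (Finset.singleton_subset_iff.mpr hvT))⟩
  rw [Finset.disjoint_right]
  intro x hx
  rw [Finset.mem_singleton] at hx
  subst hx
  intro hmem
  rcases Finset.mem_insert.mp hmem with h | h
  · exact huv h.symm
  · rw [Finset.mem_singleton] at h
    exact hwv h.symm

lemma link_has_vertex (hdc : ∀ F ∈ Γ, ∀ G ⊆ F, G ∈ Γ) (hpure : IsPure Γ)
    (hsup : Γ.sup Finset.card = 3) (hv : ({v} : Finset ℕ) ∈ Γ) :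
    ∃ u, ({u} : Finset ℕ) ∈ link Γ {v} := by
  obtain ⟨T, hT, hsub, hT3⟩ := exists_facet hpure hsup hv
  have hvT : v ∈ T := Finset.singleton_subset_iff.mp hsub
  have hne : (T \ {v}).Nonempty := by
    rw [← Finset.card_pos, Finset.card_sdiff_of_subset hsub, hT3, Finset.card_singleton]
    omega
  obtain ⟨u, hu⟩ := hne
  rw [Finset.mem_sdiff, Finset.mem_singleton] at hu
  refine ⟨u, ?_⟩
  rw [mem_link_iff]
  refine ⟨hdc _ hT _ (Finset.singleton_subset_iff.mpr hu.1),
    by rw [Finset.disjoint_singleton]; exact hu.2, hdc _ hT _ ?_⟩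
  exact Finset.union_subset (Finset.singleton_subset_iff.mpr hu.1)
    (Finset.singleton_subset_iff.mpr hvT)

lemma link_sup2 (hdc : ∀ F ∈ Γ, ∀ G ⊆ F, G ∈ Γ) (hpure : IsPure Γ)
    (hsup : Γ.sup Finset.card = 3) (hv : ({v} : Finset ℕ) ∈ Γ) :
    (link Γ {v}).sup Finset.card = 2 := by
  apply le_antisymm
  · exact Finset.sup_le (link_card_le hsup)
  · obtain ⟨u, hu⟩ := link_has_vertex hdc hpure hsup hv
    obtain ⟨w, hwu, hew⟩ := link_vertex_edge hdc hpure hsup u hu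
    have := Finset.le_sup (f := Finset.card) hew
    rwa [Finset.card_pair (Ne.symm hwu)] at this

end LinkFacts


lemma cm_link_of_conn {Γ : Finset (Finset ℕ)} {v : ℕ}
    (hdc : ∀ F ∈ Γ, ∀ G ⊆ F, G ∈ Γ) (hpure : IsPure Γ)
    (hsup : Γ.sup Finset.card = 3) (hv : ({v} : Finset ℕ) ∈ Γ)
    (hconn : ∀ u w : ℕ, ({u} : Finset ℕ) ∈ link Γ {v} → ({w} : Finset ℕ) ∈ link Γ {v} →
      Relation.ReflTransGen (eRel (link Γ {v})) u w) :
    IsCohenMacaulay K (link Γ {v}) :=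
  cm_of_graph K (link_dc hdc) (link_empty_mem hdc hv)
    (link_has_vertex hdc hpure hsup hv) (link_vertex_edge hdc hpure hsup)
    (link_card_le hsup) (link_sup2 hdc hpure hsup hv) hconn

lemma conn_link_of_cm {Γ : Finset (Finset ℕ)} {v : ℕ}
    (hdc : ∀ F ∈ Γ, ∀ G ⊆ F, G ∈ Γ) (hpure : IsPure Γ)
    (hsup : Γ.sup Finset.card = 3) (hv : ({v} : Finset ℕ) ∈ Γ)
    (hcm : IsCohenMacaulay K (link Γ {v})) :
    ∀ u w : ℕ, ({u} : Finset ℕ) ∈ link Γ {v} → ({w} : Finset ℕ) ∈ link Γ {v} →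
      Relation.ReflTransGen (eRel (link Γ {v})) u w :=
  conn_of_cm K (link_dc hdc) (link_empty_mem hdc hv) (link_sup2 hdc hpure hsup hv) hcm

lemma dc_union {Γ₁ Γ₂ : Finset (Finset ℕ)}
    (h1 : ∀ F ∈ Γ₁, ∀ G ⊆ F, G ∈ Γ₁) (h2 : ∀ F ∈ Γ₂, ∀ G ⊆ F, G ∈ Γ₂) :
    ∀ F ∈ Γ₁ ∪ Γ₂, ∀ G ⊆ F, G ∈ Γ₁ ∪ Γ₂ := by
  intro F hF G hGF
  rcases Finset.mem_union.mp hF with h | h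
  · exact Finset.mem_union_left _ (h1 _ h _ hGF)
  · exact Finset.mem_union_right _ (h2 _ h _ hGF)

lemma link_mono {Γ₁ Γ₂ : Finset (Finset ℕ)} {v : ℕ} (h : Γ₁ ⊆ Γ₂) {G : Finset ℕ}
    (hG : G ∈ link Γ₁ {v}) : G ∈ link Γ₂ {v} := by
  rw [mem_link_iff] at hG ⊢
  exact ⟨h hG.1, hG.2.1, h hG.2.2⟩

end

/-- **Lemma 2.4(i).** If `Δ` is a `2`-dimensional Buchsbaum complex on `[n]` and
`Δ_1,…,Δ_t` are `2`-dimensional complexes with vertex sets in `[n]` such that each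
`Δ ∪ Δ_k` is Buchsbaum, then `Δ ∪ Δ_1 ∪ ⋯ ∪ Δ_j` is Buchsbaum for `j = 1,…,t`. -/
theorem stmt6 (K : Type) [Field K] (n t : ℕ) (Δ : Finset (Finset ℕ))
    (Δs : ℕ → Finset (Finset ℕ))
    (hΔ : IsComplexOn n Δ) (hdim : dimZ Δ = 2) (hB : IsBuchsbaum K Δ)
    (hk : ∀ k ∈ Finset.Icc 1 t, IsComplexIn n (Δs k) ∧ dimZ (Δs k) = 2)
    (hBk : ∀ k ∈ Finset.Icc 1 t, IsBuchsbaum K (Δ ∪ Δs k)) :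
    ∀ j ∈ Finset.Icc 1 t, IsBuchsbaum K (Δ ∪ (Finset.Icc 1 j).biUnion Δs) := by
  intro j hj
  have hjt : j ≤ t := (Finset.mem_Icc.mp hj).2
  set B : Finset (Finset ℕ) := (Finset.Icc 1 j).biUnion Δs with hBdef
  set Δ' : Finset (Finset ℕ) := Δ ∪ B with hΔ'def
  -- basic facts
  have hdcΔ : ∀ F ∈ Δ, ∀ G ⊆ F, G ∈ Δ := hΔ.1
  have hsupΔ : Δ.sup Finset.card = 3 := sup3_of_dimZ hdim
  have hpureΔ : IsPure Δ := hB.1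
  have hIccsub : ∀ k ∈ Finset.Icc 1 j, k ∈ Finset.Icc 1 t := by
    intro k hkj
    rw [Finset.mem_Icc] at hkj ⊢
    omega
  have hdck : ∀ k ∈ Finset.Icc 1 t, ∀ F ∈ Δs k, ∀ G ⊆ F, G ∈ Δs k :=
    fun k hkt => (hk k hkt).1.1
  have hsupk : ∀ k ∈ Finset.Icc 1 t, (Δs k).sup Finset.card = 3 :=
    fun k hkt => sup3_of_dimZ (hk k hkt).2
  have hdcU : ∀ k ∈ Finset.Icc 1 t, ∀ F ∈ Δ ∪ Δs k, ∀ G ⊆ F, G ∈ Δ ∪ Δs k :=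
    fun k hkt => dc_union hdcΔ (hdck k hkt)
  have hsupU : ∀ k ∈ Finset.Icc 1 t, (Δ ∪ Δs k).sup Finset.card = 3 := by
    intro k hkt
    rw [Finset.sup_union, hsupΔ, hsupk k hkt]
    exact sup_idem 3
  have hpureU : ∀ k ∈ Finset.Icc 1 t, IsPure (Δ ∪ Δs k) := fun k hkt => (hBk k hkt).1
  -- vertices of Δ' are vertices of Δ
  have hvertΔ : ∀ v : ℕ, ({v} : Finset ℕ) ∈ Δ' → ({v} : Finset ℕ) ∈ Δ := by
    intro v hv
    rcases Finset.mem_union.mp hv with h | h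
    · exact h
    · obtain ⟨k, hkj, hkmem⟩ := Finset.mem_biUnion.mp h
      exact hΔ.2.2 v ((hk k (hIccsub k hkj)).1.2 _ hkmem v (Finset.mem_singleton_self v))
  -- downward closedness and sup of Δ'
  have hdc' : ∀ F ∈ Δ', ∀ G ⊆ F, G ∈ Δ' := by
    refine dc_union hdcΔ ?_
    intro F hF G hGF
    obtain ⟨k, hkj, hkmem⟩ := Finset.mem_biUnion.mp hF
    exact Finset.mem_biUnion.mpr ⟨k, hkj, hdck k (hIccsub k hkj) _ hkmem _ hGF⟩
  have hsup' : Δ'.sup Finset.card = 3 := by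
    apply le_antisymm
    · rw [hΔ'def, Finset.sup_union, hsupΔ]
      simp only [sup_le_iff, le_refl, true_and]
      apply Finset.sup_le
      intro F hF
      obtain ⟨k, hkj, hkmem⟩ := Finset.mem_biUnion.mp hF
      exact (hsupk k (hIccsub k hkj)) ▸ Finset.le_sup hkmem
    · rw [← hsupΔ]
      exact Finset.sup_mono Finset.subset_union_left
  -- purity of Δ'
  have hpure' : IsPure Δ' := by
    intro F hF hmax
    rw [hsup']
    rcases Finset.mem_union.mp hF with h | h
    · rw [← hsupΔ]
      exact hpureΔ F h fun G hG hFG => hmax G (Finset.mem_union_left _ hG) hFG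
    · obtain ⟨k, hkj, hkmem⟩ := Finset.mem_biUnion.mp h
      have hkt := hIccsub k hkj
      have hsub : Δ ∪ Δs k ⊆ Δ' := by
        apply Finset.union_subset Finset.subset_union_left
        exact (Finset.subset_biUnion_of_mem Δs hkj).trans Finset.subset_union_right
      rw [← hsupU k hkt]
      exact hpureU k hkt F (Finset.mem_union_right _ hkmem)
        fun G hG hFG => hmax G (hsub hG) hFG
  refine ⟨hpure', fun v hv' => ?_⟩
  have hvΔ : ({v} : Finset ℕ) ∈ Δ := hvertΔ v hv'
  -- connectivity of the link of v in Δ'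
  apply cm_link_of_conn K hdc' hpure' hsup' hv'
  -- the link of v in Δ is connected an contained in every link
  have hlinkΔsub : ∀ {G : Finset ℕ}, G ∈ link Δ {v} → G ∈ link Δ' {v} :=
    fun hG => link_mono Finset.subset_union_left hG
  have hconnΔ := conn_link_of_cm K hdcΔ hpureΔ hsupΔ hvΔ (hB.2 v hvΔ)
  -- every vertex of the big link connects to a vertex of `link Δ {v}`
  have hstep : ∀ u : ℕ, ({u} : Finset ℕ) ∈ link Δ' {v} →
      ∃ a, ({a} : Finset ℕ) ∈ link Δ {v} ∧
        Relation.ReflTransGen (eRel (link Δ' {v})) u a := by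
    intro u hu
    rw [mem_link_iff] at hu
    rcases Finset.mem_union.mp hu.2.2 with h | h
    · -- the edge {u, v} already lies in Δ
      refine ⟨u, ?_, .refl⟩
      rw [mem_link_iff]
      exact ⟨hdcΔ _ h _ Finset.subset_union_left, hu.2.1, h⟩
    · obtain ⟨k, hkj, hkmem⟩ := Finset.mem_biUnion.mp h
      have hkt := hIccsub k hkj
      have hsubk : Δ ∪ Δs k ⊆ Δ' := by
        apply Finset.union_subset Finset.subset_union_left
        exact (Finset.subset_biUnion_of_mem Δs hkj).trans Finset.subset_union_right
      have hvk : ({v} : Finset ℕ) ∈ Δ ∪ Δs k := Finset.mem_union_left _ hvΔ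
      have hconnk := conn_link_of_cm K (hdcU k hkt) (hpureU k hkt) (hsupU k hkt) hvk
        ((hBk k hkt).2 v hvk)
      have huk : ({u} : Finset ℕ) ∈ link (Δ ∪ Δs k) {v} := by
        rw [mem_link_iff]
        exact ⟨Finset.mem_union_right _ (hdck k hkt _ hkmem _ Finset.subset_union_left),
          hu.2.1, Finset.mem_union_right _ hkmem⟩
      obtain ⟨a, ha⟩ := link_has_vertex hdcΔ hpureΔ hsupΔ hvΔ
      have hak : ({a} : Finset ℕ) ∈ link (Δ ∪ Δs k) {v} :=
        link_mono Finset.subset_union_left ha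
      refine ⟨a, ha, ?_⟩
      refine Relation.ReflTransGen.mono ?_ _ _ (hconnk u a huk hak)
      rintro x y ⟨hxy, hmem⟩
      exact ⟨hxy, link_mono hsubk hmem⟩
  intro u w hu hw
  obtain ⟨a, ha, hpa⟩ := hstep u hu
  obtain ⟨b, hb, hpb⟩ := hstep w hw
  have hab : Relation.ReflTransGen (eRel (link Δ' {v})) a b := by
    refine Relation.ReflTransGen.mono ?_ _ _ (hconnΔ a b ha hb)
    rintro x y ⟨hxy, hmem⟩
    exact ⟨hxy, hlinkΔsub hmem⟩
  have hbw : Relation.ReflTransGen (eRel (link Δ' {v})) b w :=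
    (@Relation.ReflTransGen.stdSymm _ _ ⟨fun _ _ h => eRel_symm _ h⟩).symm _ _ hpb
  exact (hpa.trans hab).trans hbw
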